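/- Let p be an odd prime and let a, s be positive integers with a² − p·s² = 4; set η = (a + s√p)/2 ∈ F = ℚ(√p). Then the ℚ-linear map ψ : ℚ² → F defined by ψ(u, v) = (u·η − v)/√p is bijective and satisfies −2p·N_{F/ℚ}(ψ(u, v)) = 2u² − 2a·u·v + 2v² for all (u, v) ∈ ℚ². Equivalently, ψ is an isometry from ℚ² equipped with the symmetric bilinear form given by the generalized Cartan matrix [[2, −a], [−a, 2]] onto F equipped with the bilinear form ⟨x, y⟩ = −p·Tr_{F/ℚ}(x·ȳ). -/

import Mathlib

/-- Let `p` be an odd prime and `a, s` positive integers with `a² − p·s² = 4`; set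
`η = (a + s√p)/2 ∈ F = ℚ(√p) ⊂ ℝ`, with Galois conjugate `η̄ = (a − s√p)/2`. The
`ℚ`-linear map `ψ : ℚ² → F`, `ψ(u, v) = (u·η − v)/√p`, is injective with range `F`
(hence bijective onto `F`), and satisfies
`−2p·N_{F/ℚ}(ψ(u, v)) = 2u² − 2a·u·v + 2v²`, where
`N(ψ(u, v)) = ((u·η − v)/√p)·((u·η̄ − v)/(−√p))`; i.e. `ψ` is an isometry from `ℚ²`
with the bilinear form of the Cartan matrix `[[2, −a], [−a, 2]]` onto `F` with
`⟨x, y⟩ = −p·Tr(x·ȳ)`. -/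
theorem isometry_root_space (p a s : ℕ) (hp : p.Prime) (hodd : Odd p)
    (ha : 0 < a) (hs : 0 < s)
    (hpell : (a : ℤ) ^ 2 - (p : ℤ) * (s : ℤ) ^ 2 = 4) :
    Function.Injective (fun uv : ℚ × ℚ =>
      ((uv.1 : ℝ) * (((a : ℝ) + (s : ℝ) * Real.sqrt p) / 2) - (uv.2 : ℝ)) / Real.sqrt p) ∧
    Set.range (fun uv : ℚ × ℚ =>
      ((uv.1 : ℝ) * (((a : ℝ) + (s : ℝ) * Real.sqrt p) / 2) - (uv.2 : ℝ)) / Real.sqrt p)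
      = {x : ℝ | ∃ c d : ℚ, x = (c : ℝ) + (d : ℝ) * Real.sqrt p} ∧
    ∀ u v : ℚ,
      -2 * (p : ℝ) *
        ((((u : ℝ) * (((a : ℝ) + (s : ℝ) * Real.sqrt p) / 2) - (v : ℝ)) / Real.sqrt p) *
         (((u : ℝ) * (((a : ℝ) - (s : ℝ) * Real.sqrt p) / 2) - (v : ℝ)) / (-Real.sqrt p))) =
      2 * (u : ℝ) ^ 2 - 2 * (a : ℝ) * (u : ℝ) * (v : ℝ) + 2 * (v : ℝ) ^ 2 := by
  have hp0 : (0:ℝ) < (p:ℝ) := by exact_mod_cast hp.pos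
  set r := Real.sqrt p with hrdef
  have hr0 : 0 < r := Real.sqrt_pos.mpr hp0
  have hrne : r ≠ 0 := ne_of_gt hr0
  have hr2 : r * r = (p:ℝ) := Real.mul_self_sqrt hp0.le
  have hirr : Irrational r := hp.irrational_sqrt
  have key : ∀ c d : ℚ, (c:ℝ) + (d:ℝ) * r = 0 → c = 0 ∧ d = 0 := by
    intro c d h
    by_cases hd : d = 0
    · subst hd
      simp only [Rat.cast_zero, zero_mul, add_zero] at h
      exact ⟨by exact_mod_cast h, rfl⟩
    · exfalso
      have hdR : (d:ℝ) ≠ 0 := by exact_mod_cast hd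
      have : r = ((-c/d : ℚ) : ℝ) := by
        push_cast
        field_simp
        linarith
      exact hirr ⟨-c/d, this.symm⟩
  have hsQ : (s:ℚ) ≠ 0 := by exact_mod_cast hs.ne'
  have hpQ : (p:ℚ) ≠ 0 := by exact_mod_cast hp.pos.ne'
  have hpsi : ∀ u v : ℚ,
      ((u : ℝ) * (((a : ℝ) + (s : ℝ) * r) / 2) - (v : ℝ)) / r
        = ((u*s/2 : ℚ) : ℝ) + (((u*a/2 - v)/p : ℚ) : ℝ) * r := by
    intro u v
    push_cast
    field_simp
    linear_combination (2*(v:ℝ) - (u:ℝ)*(a:ℝ)) * hr2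
  refine ⟨?_, ?_, ?_⟩
  · rintro ⟨u1, v1⟩ ⟨u2, v2⟩ h
    simp only [hpsi] at h
    have h0 : ((u1*s/2 - u2*s/2 : ℚ) : ℝ) + (((u1*a/2 - v1)/p - (u2*a/2 - v2)/p : ℚ) : ℝ) * r = 0 := by
      push_cast at h ⊢
      ring_nf
      ring_nf at h
      linarith
    obtain ⟨hc, hd⟩ := key _ _ h0
    have hu : u1 = u2 := by
      field_simp at hc
      rcases mul_right_cancel₀ hsQ (by linarith : u1 * s = u2 * s) with h
      exact h
    subst hu
    have hv : v1 = v2 := by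
      field_simp at hd
      linarith
    simp [hv]
  · ext x
    simp only [Set.mem_range, Set.mem_setOf_eq, Prod.exists]
    constructor
    · rintro ⟨u, v, rfl⟩
      exact ⟨u*s/2, (u*a/2 - v)/p, hpsi u v⟩
    · rintro ⟨c, d, rfl⟩
      refine ⟨2*c/s, (2*c/s)*a/2 - p*d, ?_⟩
      rw [hpsi]
      have h1 : (2*c/s * (s:ℚ)/2) = c := by field_simp
      have h2 : ((2*c/s * (a:ℚ)/2 - (2*c/s * (a:ℚ)/2 - (p:ℚ)*d)) / (p:ℚ)) = d := by
        field_simp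
        ring
      rw [h1, h2]
  · intro u v
    have hpellR : (a:ℝ)^2 - (p:ℝ) * (s:ℝ)^2 = 4 := by exact_mod_cast hpell
    field_simp
    linear_combination (-(p:ℝ)*(u:ℝ)^2*(s:ℝ)^2 - 4*((u:ℝ)^2 - (a:ℝ)*(u:ℝ)*(v:ℝ) + (v:ℝ)^2)) * hr2 + (p:ℝ)*(u:ℝ)^2 * hpellR
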